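/- arXiv:2101.05657 — 2 statements merged into one kernel-verified Lean document; each statement's English description precedes it below -/
import Mathlib

section
/- In a noisy query game with n options, query set Q, observation space X of finite volume |X|, where each observation density f_{q,i} is bounded above by c with c·|X| > 1, any strategy that identifies the secret option i* with probability at least 2/3 must make at least log(n) / (3·log(c·|X|)) queries. -/
open MeasureTheory in
/-- Lower bound for noisy query games: any adaptive `T`-query strategy that identifies
the uniformly random secret `i⋆` with probability at least `2/3`, when every observation
density `f q i` is bounded by `c` on an observation space of finite volume, must satisfy
`T ≥ log n / (3·log (c·|X|))`. -/
theorem stmt_5 {Q X : Type*} [MeasurableSpace X] (μ : Measure X) [IsFiniteMeasure μ]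
    (n : ℕ) (hn : 1 ≤ n) (c : ℝ) (hc : 0 < c)
    (f : Q → Fin n → X → ℝ)
    (hf0 : ∀ q i x, 0 ≤ f q i x)
    (hfmeas : ∀ q i, Measurable (f q i))
    (hfc : ∀ q i x, f q i x ≤ c)
    (hfdens : ∀ q i, ∫ x, f q i x ∂μ = 1)
    (hcvol : 1 < c * (μ Set.univ).toReal)
    (T : ℕ)
    -- adaptive strategy: the `t`-th query depends only on the observations before time `t`
    (query : Fin T → (Fin T → X) → Q)
    (hquery : ∀ t x y, (∀ s : Fin T, s < t → x s = y s) → query t x = query t y)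
    (guess : (Fin T → X) → Fin n)
    -- the success probability, written via the likelihood of the observation sequence
    (hsucc : 2/3 ≤ (1 / (n : ℝ)) * ∑ i : Fin n,
      ∫ x, (if guess x = i then (1:ℝ) else 0) * ∏ t : Fin T, f (query t x) i (x t)
        ∂(Measure.pi fun _ : Fin T => μ)) :
    Real.log n / (3 * Real.log (c * (μ Set.univ).toReal)) ≤ (T : ℝ) := by
  set V : ℝ := (μ Set.univ).toReal with hVdef
  have hV0 : 0 ≤ V := ENNReal.toReal_nonneg
  have hlogpos : 0 < Real.log (c * V) := Real.log_pos hcvol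
  set ν : Measure (Fin T → X) := Measure.pi (fun _ : Fin T => μ) with hνdef
  set g : Fin n → (Fin T → X) → ℝ := fun i x =>
    (if guess x = i then (1:ℝ) else 0) * ∏ t : Fin T, f (query t x) i (x t) with hgdef
  have hg0 : ∀ i x, 0 ≤ g i x := by
    intro i x
    apply mul_nonneg
    · split <;> norm_num
    · exact Finset.prod_nonneg fun t _ => hf0 _ _ _
  have hgle : ∀ i x, g i x ≤ if guess x = i then c ^ T else 0 := by
    intro i x
    by_cases h : guess x = i
    · have hg : g i x = ∏ t : Fin T, f (query t x) i (x t) := by simp [hgdef, h]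
      rw [hg, if_pos h]
      calc ∏ t : Fin T, f (query t x) i (x t) ≤ ∏ t : Fin T, c :=
            Finset.prod_le_prod (fun t _ => hf0 _ _ _) (fun t _ => hfc _ _ _)
        _ = c ^ T := by simp
    · simp [hgdef, h]
  have hsumle : ∀ (S : Finset (Fin n)) x, ∑ i ∈ S, g i x ≤ c ^ T := by
    intro S x
    calc ∑ i ∈ S, g i x ≤ ∑ i ∈ S, (if guess x = i then c ^ T else 0) :=
          Finset.sum_le_sum fun i _ => hgle i x
      _ = if guess x ∈ S then c ^ T else 0 := Finset.sum_ite_eq S (guess x) _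
      _ ≤ c ^ T := by split; exacts [le_refl _, by positivity]
  -- volume of the product space
  have hνuniv : (ν Set.univ).toReal = V ^ T := by
    rw [hνdef, show (Set.univ : Set (Fin T → X)) = Set.univ.pi fun _ => Set.univ by simp,
      Measure.pi_pi]
    simp [hVdef, ENNReal.toReal_prod]
  -- main bound on the sum of integrals
  have key : ∑ i : Fin n, ∫ x, g i x ∂ν ≤ c ^ T * V ^ T := by
    classical
    set S : Finset (Fin n) := Finset.univ.filter (fun i => Integrable (g i) ν) with hS
    have h1 : ∑ i : Fin n, ∫ x, g i x ∂ν = ∑ i ∈ S, ∫ x, g i x ∂ν := by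
      refine (Finset.sum_subset (Finset.subset_univ S) ?_).symm
      intro i _ hiS
      exact integral_undef (by simpa [hS] using hiS)
    have h2 : ∑ i ∈ S, ∫ x, g i x ∂ν = ∫ x, ∑ i ∈ S, g i x ∂ν := by
      refine (integral_finset_sum S ?_).symm
      intro i hi
      exact (Finset.mem_filter.1 hi).2
    rw [h1, h2]
    calc ∫ x, ∑ i ∈ S, g i x ∂ν ≤ ‖∫ x, ∑ i ∈ S, g i x ∂ν‖ := Real.le_norm_self _
      _ ≤ c ^ T * (ν Set.univ).toReal := by
          refine norm_integral_le_of_norm_le_const ?_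
          filter_upwards with x
          rw [Real.norm_eq_abs, abs_of_nonneg (Finset.sum_nonneg fun i _ => hg0 i x)]
          exact hsumle S x
      _ = c ^ T * V ^ T := by rw [hνuniv]
  have hn1 : (1:ℝ) ≤ n := by exact_mod_cast hn
  have hnpos : (0:ℝ) < n := by linarith
  -- conclude 2/3 * n ≤ (c*V)^T
  have hchain : (2/3 : ℝ) ≤ (1 / (n:ℝ)) * (c ^ T * V ^ T) :=
    le_trans hsucc (mul_le_mul_of_nonneg_left key (by positivity))
  have h23 : (2/3 : ℝ) * n ≤ (c * V) ^ T := by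
    have h := mul_le_mul_of_nonneg_right hchain hnpos.le
    have e : (1 / (n:ℝ)) * (c ^ T * V ^ T) * n = (c * V) ^ T := by
      field_simp
      rw [← mul_pow]
    calc (2/3 : ℝ) * n ≤ (1 / (n:ℝ)) * (c ^ T * V ^ T) * n := h
      _ = (c * V) ^ T := e
  have hcVpos : 0 < c * V := by linarith
  have hlog1 : Real.log ((2/3 : ℝ) * n) ≤ T * Real.log (c * V) := by
    have := Real.log_le_log (by positivity) h23
    rwa [Real.log_pow] at this
  have hmain : Real.log n ≤ (T : ℝ) * (3 * Real.log (c * V)) := by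
    rcases eq_or_lt_of_le hn1 with h1 | h2
    · rw [← h1]
      simp only [Real.log_one]
      positivity
    · have hn2 : (2:ℝ) ≤ n := by
        have : (2:ℕ) ≤ n := by exact_mod_cast (by exact_mod_cast h2 : (1:ℝ) < n)
        exact_mod_cast this
      have hlog2 : Real.log 2 ≤ Real.log n := Real.log_le_log (by norm_num) hn2
      have hsplit : Real.log ((2/3 : ℝ) * n) = Real.log (2/3) + Real.log n :=
        Real.log_mul (by norm_num) (by positivity)
      -- 2 * log n ≥ 3 * log (3/2) = -3 * log (2/3)
      have h32 : 3 * Real.log (3/2 : ℝ) ≤ 2 * Real.log n := by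
        have h1 : Real.log ((3/2:ℝ)^3) ≤ Real.log ((n:ℝ)^2) := by
          apply Real.log_le_log (by norm_num)
          nlinarith [hn2]
        rw [Real.log_pow, Real.log_pow] at h1
        push_cast at h1
        linarith
      have hneg : Real.log (2/3 : ℝ) = - Real.log (3/2 : ℝ) := by
        rw [← Real.log_inv]; norm_num
      have : Real.log n ≤ 3 * Real.log ((2/3 : ℝ) * n) := by
        rw [hsplit, hneg]; linarith
      calc Real.log n ≤ 3 * Real.log ((2/3 : ℝ) * n) := this
        _ ≤ 3 * ((T : ℝ) * Real.log (c * V)) := by linarith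
        _ = (T : ℝ) * (3 * Real.log (c * V)) := by ring
  rw [div_le_iff₀ (by positivity)]
  linarith [hmain]
end

section
/- A hyperbolic isoceles triangle with two sides of length r whose altitude onto the third side has length r − 1 has third side of length c(r) satisfying c(r) = O(1) as r → ∞; precisely, (cosh c − 1)² / sinh² c = (1 − sinh²(r−1)/sinh² r) · tanh² r, the right-hand side converges to 1 − e⁻² as r → ∞, and hence c(r) converges to a finite limit. -/
open Filter Real

lemma log_tanh_ratio (y : ℝ) : Real.log ((1 + tanh y) / (1 - tanh y)) = 2 * y := by
  have hc : (0:ℝ) < cosh y := Real.cosh_pos y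
  have h1 : 1 + tanh y = Real.exp y / cosh y := by
    rw [Real.tanh_eq_sinh_div_cosh, ← Real.cosh_add_sinh]
    field_simp
  have h2 : 1 - tanh y = Real.exp (-y) / cosh y := by
    rw [Real.tanh_eq_sinh_div_cosh, ← Real.cosh_sub_sinh]
    field_simp
  have h3 : Real.exp y / cosh y / (Real.exp (-y) / cosh y) = Real.exp y / Real.exp (-y) := by
    field_simp
  rw [h1, h2, h3, ← Real.exp_sub, Real.log_exp]; ring

lemma tanh_tendsto_one : Tendsto Real.tanh atTop (nhds 1) := by
  have hE : Tendsto (fun r : ℝ => Real.exp (-(2 * r))) atTop (nhds 0) :=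
    Real.tendsto_exp_neg_atTop_nhds_zero.comp (tendsto_id.const_mul_atTop two_pos)
  have h : Tendsto (fun r : ℝ => (1 - Real.exp (-(2*r))) / (1 + Real.exp (-(2*r))))
      atTop (nhds 1) := by
    have := ((tendsto_const_nhds (x := (1:ℝ))).sub hE).div
      ((tendsto_const_nhds (x := (1:ℝ))).add hE) (by norm_num)
    simpa [Pi.div_def] using this
  refine h.congr fun r => ?_
  have he : Real.exp (-(2*r)) = Real.exp (-r) * Real.exp (-r) := by
    rw [← Real.exp_add]; ring_nf
  have h1 : Real.exp (-r) * Real.exp r = 1 := by rw [← Real.exp_add]; simp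
  rw [Real.tanh_eq_sinh_div_cosh, Real.sinh_eq, Real.cosh_eq]
  have hden : Real.exp r + Real.exp (-r) > 0 := by positivity
  have hden2 : (1:ℝ) + Real.exp (-(2*r)) > 0 := by positivity
  field_simp
  nlinarith [Real.exp_pos r, Real.exp_pos (-r)]

open Filter Real in
theorem stmt_6 :
    Tendsto (fun r : ℝ => (1 - sinh (r - 1) ^ 2 / sinh r ^ 2) * tanh r ^ 2)
      atTop (nhds (1 - Real.exp (-2))) ∧
    ∀ c : ℝ → ℝ,
      (∀ r : ℝ, 2 ≤ r → 0 < c r ∧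
        (cosh (c r) - 1) ^ 2 / sinh (c r) ^ 2
          = (1 - sinh (r - 1) ^ 2 / sinh r ^ 2) * tanh r ^ 2) →
      ∃ L : ℝ, Tendsto c atTop (nhds L) := by
  have htanh := tanh_tendsto_one
  -- sinh (r-1)/sinh r → exp (-1)
  have hq : Tendsto (fun r : ℝ => sinh (r - 1) / sinh r) atTop (nhds (Real.exp (-1))) := by
    have h : Tendsto (fun r : ℝ => cosh 1 - sinh 1 / tanh r) atTop
        (nhds (Real.exp (-1))) := by
      have := (tendsto_const_nhds (x := Real.cosh 1)).sub
        ((tendsto_const_nhds (x := Real.sinh 1)).div htanh one_ne_zero)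
      simpa [Real.cosh_sub_sinh] using this
    refine h.congr' ?_
    filter_upwards [eventually_ge_atTop (1:ℝ)] with r hr
    have hs : (0:ℝ) < sinh r := Real.sinh_pos_iff.2 (by linarith)
    rw [Real.sinh_sub, Real.tanh_eq_sinh_div_cosh]
    have hc : (0:ℝ) < cosh r := Real.cosh_pos r
    field_simp
  have part1 : Tendsto (fun r : ℝ => (1 - sinh (r - 1) ^ 2 / sinh r ^ 2) * tanh r ^ 2)
      atTop (nhds (1 - Real.exp (-2))) := by
    have h : Tendsto (fun r : ℝ => (1 - (sinh (r-1) / sinh r) ^ 2) * tanh r ^ 2)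
        atTop (nhds ((1 - Real.exp (-1) ^ 2) * 1 ^ 2)) :=
      ((tendsto_const_nhds).sub (hq.pow 2)).mul (htanh.pow 2)
    have he : (1 - Real.exp (-1) ^ 2) * 1 ^ 2 = 1 - Real.exp (-2) := by
      rw [← Real.exp_nat_mul]; norm_num
    rw [he] at h
    refine h.congr fun r => ?_
    rw [div_pow]
  refine ⟨part1, fun c hc => ?_⟩
  set t := Real.sqrt (1 - Real.exp (-2)) with ht
  have he1 : Real.exp (-2) < 1 := Real.exp_lt_one_iff.2 (by norm_num)
  have he0 : (0:ℝ) < Real.exp (-2) := Real.exp_pos _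
  have ht0 : 0 < t := Real.sqrt_pos.2 (by linarith)
  have ht1 : t < 1 := by
    rw [ht, Real.sqrt_lt' one_pos]; nlinarith
  -- tanh (c r / 2) = sqrt (g r) eventually
  have hu : Tendsto (fun r => tanh (c r / 2)) atTop (nhds t) := by
    have hs : Tendsto (fun r : ℝ => Real.sqrt ((1 - sinh (r - 1) ^ 2 / sinh r ^ 2) * tanh r ^ 2))
        atTop (nhds t) := (Real.continuous_sqrt.continuousAt).tendsto.comp part1
    refine hs.congr' ?_
    filter_upwards [eventually_ge_atTop (2:ℝ)] with r hr
    obtain ⟨hcr, heq⟩ := hc r hr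
    have h2 : (0:ℝ) < c r / 2 := by linarith
    have hsp : 0 < sinh (c r / 2) := Real.sinh_pos_iff.2 h2
    have hcp : 0 < cosh (c r / 2) := Real.cosh_pos _
    have htp : 0 ≤ tanh (c r / 2) := by
      rw [Real.tanh_eq_sinh_div_cosh]; positivity
    rw [← heq]
    have hcr2 : c r = 2 * (c r / 2) := by ring
    have hcosh : cosh (c r) - 1 = 2 * sinh (c r / 2) ^ 2 := by
      nth_rewrite 1 [hcr2]
      rw [Real.cosh_two_mul, Real.cosh_sq]; ring
    have hsinh : sinh (c r) = 2 * sinh (c r / 2) * cosh (c r / 2) := by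
      nth_rewrite 1 [hcr2]
      rw [Real.sinh_two_mul]
    rw [hcosh, hsinh, Real.tanh_eq_sinh_div_cosh]
    rw [show (2 * sinh (c r / 2) ^ 2) ^ 2 / (2 * sinh (c r / 2) * cosh (c r / 2)) ^ 2
        = (sinh (c r / 2) / cosh (c r / 2)) ^ 2 by field_simp]
    rw [Real.sqrt_sq (by positivity)]
  -- recover c r via log
  refine ⟨Real.log ((1 + t) / (1 - t)), ?_⟩
  have hF : ContinuousAt (fun s : ℝ => Real.log ((1 + s) / (1 - s))) t := by
    have hne : (1 + t) / (1 - t) ≠ 0 :=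
      (div_pos (by linarith) (by linarith)).ne'
    have hdiv : ContinuousAt (fun s : ℝ => (1 + s) / (1 - s)) t :=
      ContinuousAt.div (by fun_prop) (by fun_prop)
        (sub_ne_zero_of_ne (ne_of_gt ht1))
    exact hdiv.log hne
  have := hF.tendsto.comp hu
  refine this.congr' ?_
  filter_upwards [eventually_ge_atTop (2:ℝ)] with r hr
  simp only [Function.comp_apply]
  rw [log_tanh_ratio (c r / 2)]
  ring
end
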